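/- Let U, V : ℝ → ℝ be continuously differentiable, let a ∈ ℝ, and let u, v : ℝ → ℝ be twice differentiable functions such that U(u(t)) − a > 0 and a + V(v(t)) > 0 for all t, and satisfying the first-order system u̇(t) = √(U(u(t)) − a) / (U(u(t)) + V(v(t))), v̇(t) = √(a + V(v(t))) / (U(u(t)) + V(v(t))). Then (u(t), v(t)) satisfies the geodesic equations of the isothermal Liouville metric g11 = g22 = U(u) + V(v), g12 = 0: 2(U(u) + V(v)) ü + U′(u) u̇² + 2 V′(v) u̇ v̇ − U′(u) v̇² = 0 and 2(U(u) + V(v)) v̈ − V′(v) u̇² + 2 U′(u) u̇ v̇ + V′(v) v̇² = 0. -/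

import Mathlib

/-- Solutions of the first-order system
`u̇ = √(U(u) − a)/(U(u) + V(v))`, `v̇ = √(a + V(v))/(U(u) + V(v))`
satisfy the geodesic equations of the isothermal Liouville metric
`g11 = g22 = U(u) + V(v)`, `g12 = 0`. -/
theorem liouville_first_order_system_satisfies_geodesic_equations
    (U V : ℝ → ℝ) (hU : ContDiff ℝ 1 U) (hV : ContDiff ℝ 1 V)
    (a : ℝ) (u v : ℝ → ℝ)
    (hu1 : ∀ t, DifferentiableAt ℝ u t)
    (hu2 : ∀ t, DifferentiableAt ℝ (deriv u) t)
    (hv1 : ∀ t, DifferentiableAt ℝ v t)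
    (hv2 : ∀ t, DifferentiableAt ℝ (deriv v) t)
    (hUpos : ∀ t, 0 < U (u t) - a)
    (hVpos : ∀ t, 0 < a + V (v t))
    (hueq : ∀ t, deriv u t = Real.sqrt (U (u t) - a) / (U (u t) + V (v t)))
    (hveq : ∀ t, deriv v t = Real.sqrt (a + V (v t)) / (U (u t) + V (v t))) :
    ∀ t : ℝ,
      2 * (U (u t) + V (v t)) * deriv (deriv u) t +
        deriv U (u t) * (deriv u t) ^ 2 +
        2 * deriv V (v t) * deriv u t * deriv v t -
        deriv U (u t) * (deriv v t) ^ 2 = 0 ∧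
      2 * (U (u t) + V (v t)) * deriv (deriv v) t -
        deriv V (v t) * (deriv u t) ^ 2 +
        2 * deriv U (u t) * deriv u t * deriv v t +
        deriv V (v t) * (deriv v t) ^ 2 = 0 := by
  intro t
  have hUd : Differentiable ℝ U := hU.differentiable one_ne_zero
  have hVd : Differentiable ℝ V := hV.differentiable one_ne_zero
  set p : ℝ := Real.sqrt (U (u t) - a) with hpdef
  set q : ℝ := Real.sqrt (a + V (v t)) with hqdef
  have hppos : 0 < p := Real.sqrt_pos.2 (hUpos t)
  have hqpos : 0 < q := Real.sqrt_pos.2 (hVpos t)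
  have hp2 : p ^ 2 = U (u t) - a := Real.sq_sqrt (hUpos t).le
  have hq2 : q ^ 2 = a + V (v t) := Real.sq_sqrt (hVpos t).le
  have hE2 : U (u t) + V (v t) = p ^ 2 + q ^ 2 := by rw [hp2, hq2]; ring
  have hEpos : 0 < U (u t) + V (v t) := by nlinarith [hUpos t, hVpos t]
  have hEne : U (u t) + V (v t) ≠ 0 := hEpos.ne'
  set A : ℝ := deriv U (u t)
  set B : ℝ := deriv V (v t)
  have hut : deriv u t = p / (U (u t) + V (v t)) := hueq t
  have hvt : deriv v t = q / (U (u t) + V (v t)) := hveq t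
  -- derivatives of the compositions
  have hU' : HasDerivAt (fun s => U (u s)) (A * (p / (U (u t) + V (v t)))) t := by
    rw [← hut]; exact ((hUd (u t)).hasDerivAt).comp t (hu1 t).hasDerivAt
  have hV' : HasDerivAt (fun s => V (v s)) (B * (q / (U (u t) + V (v t)))) t := by
    rw [← hvt]; exact ((hVd (v t)).hasDerivAt).comp t (hv1 t).hasDerivAt
  have hE' : HasDerivAt (fun s => U (u s) + V (v s))
      (A * (p / (U (u t) + V (v t))) + B * (q / (U (u t) + V (v t)))) t := hU'.add hV'
  have hp' : HasDerivAt (fun s => Real.sqrt (U (u s) - a))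
      (1 / (2 * p) * (A * (p / (U (u t) + V (v t))))) t :=
    (Real.hasDerivAt_sqrt (hUpos t).ne').comp t (hU'.sub_const a)
  have hq' : HasDerivAt (fun s => Real.sqrt (a + V (v s)))
      (1 / (2 * q) * (B * (q / (U (u t) + V (v t))))) t :=
    (Real.hasDerivAt_sqrt (hVpos t).ne').comp t (hV'.const_add a)
  have hdu : deriv u = fun s => Real.sqrt (U (u s) - a) / (U (u s) + V (v s)) :=
    funext hueq
  have hdv : deriv v = fun s => Real.sqrt (a + V (v s)) / (U (u s) + V (v s)) :=
    funext hveq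
  have huu : deriv (deriv u) t =
      (1 / (2 * p) * (A * (p / (U (u t) + V (v t)))) * (U (u t) + V (v t)) -
        p * (A * (p / (U (u t) + V (v t))) + B * (q / (U (u t) + V (v t))))) /
        (U (u t) + V (v t)) ^ 2 := by
    rw [hdu]; exact (hp'.div hE' hEne).deriv
  have hvv : deriv (deriv v) t =
      (1 / (2 * q) * (B * (q / (U (u t) + V (v t)))) * (U (u t) + V (v t)) -
        q * (A * (p / (U (u t) + V (v t))) + B * (q / (U (u t) + V (v t))))) /
        (U (u t) + V (v t)) ^ 2 := by
    rw [hdv]; exact (hq'.div hE' hEne).deriv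
  rw [huu, hvv, hut, hvt, hE2]
  have hpq : p ^ 2 + q ^ 2 ≠ 0 := by positivity
  constructor
  · field_simp
    ring
  · field_simp
    ring
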